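/- arXiv:1407.1106 — 2 statements merged into one kernel-verified Lean document; each statement's English description precedes it below -/
import Mathlib

section
/- For positive real numbers Z1, Z2, s, γ, a, α and positive integers ν, N, the integral ∫₀^∞ λ^(ν-1) · ((1 + (Z2/Z1)λ) / (1 + (Z2/Z1)(1 + a²sαγ/Z2)λ))^N · exp(-λ) dλ equals Γ(ν)/((Z2/Z1)^ν (1 + a²sαγ/Z2)^(ν+N)) · Σ_{k=0}^{N} C(N,k) (a²sαγ/Z2)^k · U(ν, ν+1-k, Z1/(Z2(1 + a²sαγ/Z2))), where U is Tricomi's confluent hypergeometric function of the second kind. -/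
open Real MeasureTheory Set

/-- Tricomi's confluent hypergeometric function of the second kind,
via its integral representation (valid for `a > 0`, `z > 0`). -/
noncomputable def tricomiU (a b z : ℝ) : ℝ :=
  (1 / Real.Gamma a) * ∫ t in Set.Ioi (0:ℝ),
    Real.exp (-z * t) * t ^ (a - 1) * (1 + t) ^ (b - a - 1)

theorem stmt0 (Z1 Z2 s γ a α : ℝ) (hZ1 : 0 < Z1) (hZ2 : 0 < Z2) (hs : 0 < s)
    (hγ : 0 < γ) (ha : 0 < a) (hα : 0 < α) (ν N : ℕ) (hν : 0 < ν) (hN : 0 < N) :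
    (∫ x in Set.Ioi (0:ℝ), x ^ ((ν:ℝ) - 1) *
        ((1 + (Z2 / Z1) * x) / (1 + (Z2 / Z1) * (1 + a^2 * s * α * γ / Z2) * x)) ^ N *
        Real.exp (-x)) =
      Real.Gamma ν / ((Z2 / Z1) ^ (ν:ℕ) * (1 + a^2 * s * α * γ / Z2) ^ ((ν:ℝ) + N)) *
        ∑ k ∈ Finset.range (N + 1), (N.choose k : ℝ) * (a^2 * s * α * γ / Z2) ^ k *
          tricomiU ν ((ν:ℝ) + 1 - k) (Z1 / (Z2 * (1 + a^2 * s * α * γ / Z2))) := by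
  have hd : (0:ℝ) < a^2 * s * α * γ / Z2 := by positivity
  set d : ℝ := a^2 * s * α * γ / Z2 with hd_def
  have hc : (0:ℝ) < Z2 / Z1 := div_pos hZ2 hZ1
  set c : ℝ := Z2 / Z1 with hc_def
  have hd1 : (0:ℝ) < 1 + d := by linarith
  have hm : (0:ℝ) < c * (1 + d) := mul_pos hc hd1
  set m : ℝ := c * (1 + d) with hm_def
  have hz : Z1 / (Z2 * (1 + d)) = m⁻¹ := by
    rw [hm_def, hc_def]; field_simp
  clear_value m c d
  have hνR : (0:ℝ) < (ν:ℝ) := by exact_mod_cast hν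
  have hGν : (0:ℝ) < Real.Gamma ν := Real.Gamma_pos_of_pos hνR
  -- integrability
  have hdom : IntegrableOn (fun t : ℝ => t ^ ((ν:ℝ)-1) * Real.exp (-m⁻¹ * t)) (Ioi 0) := by
    have h := integrableOn_rpow_mul_exp_neg_mul_rpow
      (by linarith : (-1:ℝ) < (ν:ℝ)-1) (p := 1) one_pos (inv_pos.mpr hm)
    exact h.congr_fun (fun x hx => by simp only [Real.rpow_one]) measurableSet_Ioi
  have hInt : ∀ k : ℕ, IntegrableOn
      (fun t : ℝ => Real.exp (-m⁻¹ * t) * t ^ ((ν:ℝ)-1) * (1+t) ^ (-(k:ℝ))) (Ioi 0) := by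
    intro k
    refine Integrable.mono' hdom ?_ ?_
    · apply Measurable.aestronglyMeasurable
      fun_prop
    · filter_upwards [ae_restrict_mem measurableSet_Ioi] with t ht
      have ht0 : (0:ℝ) < t := ht
      have h1t : (1:ℝ) ≤ 1 + t := by linarith
      have hb : (1+t) ^ (-(k:ℝ)) ≤ 1 :=
        Real.rpow_le_one_of_one_le_of_nonpos h1t (by simp)
      have hb0 : (0:ℝ) ≤ (1+t) ^ (-(k:ℝ)) := Real.rpow_nonneg (by linarith) _
      have ht1 : (0:ℝ) ≤ t ^ ((ν:ℝ)-1) := Real.rpow_nonneg ht0.le _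
      have he : (0:ℝ) ≤ Real.exp (-m⁻¹ * t) := (Real.exp_pos _).le
      rw [Real.norm_eq_abs, abs_of_nonneg (mul_nonneg (mul_nonneg he ht1) hb0)]
      calc Real.exp (-m⁻¹ * t) * t ^ ((ν:ℝ)-1) * (1+t) ^ (-(k:ℝ))
          ≤ Real.exp (-m⁻¹ * t) * t ^ ((ν:ℝ)-1) * 1 :=
            mul_le_mul_of_nonneg_left hb (mul_nonneg he ht1)
        _ = t ^ ((ν:ℝ)-1) * Real.exp (-m⁻¹ * t) := by ring
  -- each tricomiU as an explicit integral
  have hU : ∀ k : ℕ, tricomiU (ν:ℝ) ((ν:ℝ)+1-(k:ℝ)) m⁻¹ = (1/Real.Gamma ν) *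
      ∫ t in Ioi (0:ℝ), Real.exp (-m⁻¹ * t) * t ^ ((ν:ℝ)-1) * (1+t) ^ (-(k:ℝ)) := by
    intro k
    unfold tricomiU
    rw [show (ν:ℝ)+1-(k:ℝ)-(ν:ℝ)-1 = -(k:ℝ) by ring]
  -- swap sum and integral, apply binomial theorem
  have hswap : (∑ k ∈ Finset.range (N+1), (N.choose k : ℝ) * d ^ k *
        ∫ t in Ioi (0:ℝ), Real.exp (-m⁻¹ * t) * t ^ ((ν:ℝ) - 1) * (1 + t) ^ (-(k:ℝ)))
      = ∫ t in Ioi (0:ℝ), Real.exp (-m⁻¹ * t) * t ^ ((ν:ℝ) - 1) * (1 + d / (1 + t)) ^ N := by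
    calc (∑ k ∈ Finset.range (N+1), (N.choose k : ℝ) * d ^ k *
          ∫ t in Ioi (0:ℝ), Real.exp (-m⁻¹ * t) * t ^ ((ν:ℝ) - 1) * (1 + t) ^ (-(k:ℝ)))
        = ∑ k ∈ Finset.range (N+1), ∫ t in Ioi (0:ℝ),
            (N.choose k : ℝ) * d ^ k *
              (Real.exp (-m⁻¹ * t) * t ^ ((ν:ℝ) - 1) * (1 + t) ^ (-(k:ℝ))) :=
          Finset.sum_congr rfl fun k _ => (MeasureTheory.integral_const_mul _ _).symm
      _ = ∫ t in Ioi (0:ℝ), ∑ k ∈ Finset.range (N+1), (N.choose k : ℝ) * d ^ k *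
            (Real.exp (-m⁻¹ * t) * t ^ ((ν:ℝ) - 1) * (1 + t) ^ (-(k:ℝ))) :=
          (MeasureTheory.integral_finset_sum _ fun k _ => ((hInt k).const_mul _)).symm
      _ = _ := by
          refine setIntegral_congr_fun measurableSet_Ioi fun t ht => ?_
          have ht0 : (0:ℝ) < t := ht
          have h1t : (0:ℝ) < 1 + t := by linarith
          rw [show (1:ℝ) + d/(1+t) = d/(1+t) + 1 by ring, add_pow, Finset.mul_sum]
          refine Finset.sum_congr rfl fun k _ => ?_
          rw [Real.rpow_neg h1t.le, Real.rpow_natCast, div_pow, one_pow]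
          ring
  -- change of variables t = m * x
  have hcv : (∫ t in Ioi (0:ℝ), Real.exp (-m⁻¹ * t) * t ^ ((ν:ℝ) - 1) * (1 + d / (1 + t)) ^ N)
      = m ^ ((ν:ℝ)) * ((1+d)^N *
        ∫ x in Ioi (0:ℝ), x ^ ((ν:ℝ) - 1) * ((1 + c * x) / (1 + m * x)) ^ N * Real.exp (-x)) := by
    have h := integral_comp_mul_left_Ioi
      (fun t : ℝ => Real.exp (-m⁻¹ * t) * t ^ ((ν:ℝ) - 1) * (1 + d / (1 + t)) ^ N) 0 hm
    rw [mul_zero, smul_eq_mul] at h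
    have h2 : (∫ t in Ioi (0:ℝ),
        Real.exp (-m⁻¹ * t) * t ^ ((ν:ℝ) - 1) * (1 + d / (1 + t)) ^ N)
        = m * ∫ x in Ioi (0:ℝ),
            Real.exp (-m⁻¹ * (m * x)) * (m * x) ^ ((ν:ℝ) - 1) * (1 + d / (1 + m * x)) ^ N := by
      rw [h, ← mul_assoc, mul_inv_cancel₀ hm.ne', one_mul]
    rw [h2]
    have h3 : (∫ x in Ioi (0:ℝ),
        Real.exp (-m⁻¹ * (m * x)) * (m * x) ^ ((ν:ℝ) - 1) * (1 + d / (1 + m * x)) ^ N)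
        = ∫ x in Ioi (0:ℝ), (m ^ ((ν:ℝ)-1) * (1+d)^N) *
            (x ^ ((ν:ℝ) - 1) * ((1 + c * x) / (1 + m * x)) ^ N * Real.exp (-x)) := by
      refine setIntegral_congr_fun measurableSet_Ioi fun x hx => ?_
      have hx0 : (0:ℝ) < x := hx
      have h1mx : (0:ℝ) < 1 + m * x := by nlinarith
      have hne : (1 + m * x) ≠ 0 := h1mx.ne'
      have hkey : (1+d)*(1+c*x) = (1 + m * x) + d := by rw [hm_def]; ring
      have hfrac : (1:ℝ) + d/(1+m*x) = (1+d)*((1+c*x)/(1+m*x)) := by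
        rw [← mul_div_assoc, hkey, add_div, div_self hne]
      rw [show -m⁻¹*(m*x) = -x by rw [neg_mul, inv_mul_cancel_left₀ hm.ne'], Real.mul_rpow hm.le hx0.le, hfrac, mul_pow]
      ring
    rw [h3, MeasureTheory.integral_const_mul, ← mul_assoc,
      show m * (m ^ ((ν:ℝ)-1) * (1+d)^N) = m ^ ((ν:ℝ)) * (1+d)^N by
        rw [show ((ν:ℝ)) = 1 + ((ν:ℝ)-1) by ring, Real.rpow_add hm, Real.rpow_one]; ring,
      mul_assoc]
  -- assembly
  rw [hz]
  simp_rw [hU]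
  have hpull : (∑ k ∈ Finset.range (N+1), (N.choose k : ℝ) * d ^ k *
      ((1/Real.Gamma ν) * ∫ t in Ioi (0:ℝ),
        Real.exp (-m⁻¹ * t) * t ^ ((ν:ℝ)-1) * (1+t) ^ (-(k:ℝ))))
      = (1/Real.Gamma ν) * ∑ k ∈ Finset.range (N+1), (N.choose k : ℝ) * d ^ k *
        ∫ t in Ioi (0:ℝ), Real.exp (-m⁻¹ * t) * t ^ ((ν:ℝ)-1) * (1+t) ^ (-(k:ℝ)) := by
    rw [Finset.mul_sum]; exact Finset.sum_congr rfl fun k _ => by ring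
  rw [hpull, hswap, hcv]
  have h1 : m ^ ((ν:ℝ)) = c^ν * (1+d)^((ν:ℝ)) := by
    rw [hm_def, Real.mul_rpow hc.le hd1.le, Real.rpow_natCast]
  have h2 : (1+d) ^ ((ν:ℝ)+(N:ℝ)) = (1+d)^((ν:ℝ)) * (1+d)^N := by
    rw [Real.rpow_add hd1, Real.rpow_natCast, Real.rpow_natCast]
  rw [h1, h2]
  have hcν : (0:ℝ) < c^ν := pow_pos hc ν
  have hdν : (0:ℝ) < (1+d)^((ν:ℝ)) := Real.rpow_pos_of_pos hd1 _
  have hdN : (0:ℝ) < (1+d)^N := pow_pos hd1 N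
  field_simp
  ring
  exact setIntegral_congr_fun measurableSet_Ioi fun x _ => by ring
end

section
/- For z → 0⁺ and fixed a > 0, the confluent hypergeometric function of the second kind satisfies: U(a,b,z) ~ (Γ(b-1)/Γ(a)) z^{1-b} if b ≥ 2 (integer); U(a,1,z) ~ -(1/Γ(a))(ln z + ψ(a)) where ψ is the digamma function; and U(a,b,z) → Γ(1-b)/Γ(1+a-b) if b ≤ 0 (integer). In particular, for integer b ≤ 0, lim_{z→0⁺} U(a,b,z) = Γ(1-b)/Γ(1+a-b). -/
open Real Filter Set MeasureTheory

lemma realBeta (u v : ℝ) (hu : 0 < u) (hv : 0 < v) :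
    ∫ x in Ioo (0:ℝ) 1, x ^ (u-1) * (1-x) ^ (v-1)
      = Real.Gamma u * Real.Gamma v / Real.Gamma (u+v) := by
  have hu' : 0 < (u:ℂ).re := by simpa using hu
  have hv' : 0 < (v:ℂ).re := by simpa using hv
  have h := Complex.Gamma_mul_Gamma_eq_betaIntegral hu' hv'
  have hbeta : Complex.betaIntegral u v
      = ((∫ x in (0:ℝ)..1, x ^ (u-1) * (1-x) ^ (v-1) : ℝ) : ℂ) := by
    rw [← intervalIntegral.integral_ofReal]
    unfold Complex.betaIntegral
    refine intervalIntegral.integral_congr fun x hx => ?_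
    rw [Set.uIcc_of_le (by norm_num : (0:ℝ) ≤ 1)] at hx
    push_cast
    rw [Complex.ofReal_cpow hx.1, Complex.ofReal_cpow (by linarith [hx.2])]
    push_cast
    ring
  rw [hbeta, show ((u:ℂ) + v) = ((u+v:ℝ):ℂ) by push_cast; ring,
    Complex.Gamma_ofReal, Complex.Gamma_ofReal, Complex.Gamma_ofReal,
    ← Complex.ofReal_mul, ← Complex.ofReal_mul] at h
  have h2 := Complex.ofReal_injective h
  have hg : Real.Gamma (u+v) ≠ 0 := (Real.Gamma_pos_of_pos (by linarith)).ne'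
  rw [intervalIntegral.integral_of_le (by norm_num : (0:ℝ) ≤ 1),
    MeasureTheory.integral_Ioc_eq_integral_Ioo] at h2
  field_simp
  linarith [h2]

lemma deriv_aux {x : ℝ} (hx : x ∈ Ioo (0:ℝ) 1) :
    HasDerivAt (fun x : ℝ => x / (1 - x)) (((1-x)^2)⁻¹) x := by
  have h1 : (1:ℝ) - x ≠ 0 := by have := hx.2; intro h; nlinarith
  have := (hasDerivAt_id x).div ((hasDerivAt_const x 1).sub (hasDerivAt_id x)) h1
  refine this.congr_deriv ?_
  simp only [Pi.sub_apply, id]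
  field_simp
  ring

lemma image_aux : (fun x : ℝ => x / (1 - x)) '' Ioo 0 1 = Ioi 0 := by
  ext t
  constructor
  · rintro ⟨x, hx, rfl⟩
    exact div_pos hx.1 (by linarith [hx.2])
  · intro ht
    rw [mem_Ioi] at ht
    refine ⟨t / (1 + t), ⟨div_pos ht (by linarith), ?_⟩, ?_⟩
    · rw [div_lt_one (by linarith : (0:ℝ) < 1 + t)]; linarith
    · have h1 : (1:ℝ) + t ≠ 0 := by positivity
      field_simp
      ring

lemma injOn_aux : InjOn (fun x : ℝ => x / (1 - x)) (Ioo 0 1) := by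
  intro x hx y hy hxy
  have h1 : (1:ℝ) - x ≠ 0 := by have := hx.2; intro h; nlinarith
  have h2 : (1:ℝ) - y ≠ 0 := by have := hy.2; intro h; nlinarith
  field_simp at hxy
  linarith [hxy]

lemma pointwise_aux (u v : ℝ) {x : ℝ} (hx : x ∈ Ioo (0:ℝ) 1) :
    |((1-x)^2)⁻¹| • ((x/(1-x)) ^ (u-1) * (1 + x/(1-x)) ^ (-u-v))
      = x ^ (u-1) * (1-x) ^ (v-1) := by
  have hx0 : 0 < x := hx.1
  have h1x : 0 < 1 - x := by linarith [hx.2]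
  rw [smul_eq_mul, abs_of_pos (by positivity)]
  have e1 : 1 + x / (1 - x) = (1 - x)⁻¹ := by field_simp; ring
  rw [e1, Real.div_rpow hx0.le h1x.le, Real.inv_rpow h1x.le,
    ← Real.rpow_neg h1x.le, div_eq_mul_inv, ← Real.rpow_neg h1x.le,
    show ((1-x)^2)⁻¹ = (1-x) ^ (-2:ℝ) by
      rw [show (-2:ℝ) = -(2:ℕ) by norm_num, Real.rpow_neg h1x.le, Real.rpow_natCast]]
  rw [mul_comm ((1-x) ^ (-2:ℝ)), mul_assoc, mul_assoc, ← Real.rpow_add h1x,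
    ← Real.rpow_add h1x]
  congr 1
  ring

lemma subst_aux (u v : ℝ) (hu : 0 < u) (hv : 0 < v) :
    ∫ t in Ioi (0:ℝ), t ^ (u-1) * (1+t) ^ (-u-v)
      = ∫ x in Ioo (0:ℝ) 1, x ^ (u-1) * (1-x) ^ (v-1) := by
  have key := integral_image_eq_integral_abs_deriv_smul (f := fun x : ℝ => x / (1-x))
      (f' := fun x : ℝ => ((1-x)^2)⁻¹) measurableSet_Ioo
      (fun x hx => (deriv_aux hx).hasDerivWithinAt) injOn_aux
      (fun t => t ^ (u-1) * (1+t) ^ (-u-v))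
  rw [image_aux] at key
  rw [key]
  exact setIntegral_congr_fun measurableSet_Ioo fun x hx => pointwise_aux u v hx

lemma integrand_integrable (u v : ℝ) (hu : 0 < u) (hv : 0 < v) :
    IntegrableOn (fun t : ℝ => t ^ (u-1) * (1+t) ^ (-u-v)) (Ioi 0) := by
  have hu' : 0 < (u:ℂ).re := by simpa using hu
  have hv' : 0 < (v:ℂ).re := by simpa using hv
  have hC := (Complex.betaIntegral_convergent hu' hv').1
  have hre : IntegrableOn (fun x : ℝ =>
      (((x:ℂ) ^ ((u:ℂ)-1) * ((1:ℂ)-x) ^ ((v:ℂ)-1)).re)) (Ioc 0 1) := hC.re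
  have hIoo : IntegrableOn (fun x : ℝ => x ^ (u-1) * (1-x) ^ (v-1)) (Ioo 0 1) := by
    refine ((hre.mono_set Ioo_subset_Ioc_self).congr_fun (fun x hx => ?_) measurableSet_Ioo)
    have hx0 : (0:ℝ) ≤ x := hx.1.le
    have h1x : (0:ℝ) ≤ 1 - x := by linarith [hx.2]
    beta_reduce
    rw [show ((u:ℂ)-1) = ((u-1:ℝ):ℂ) by push_cast; ring,
      show ((1:ℂ)-(x:ℂ)) = ((1-x:ℝ):ℂ) by push_cast; ring,
      show ((v:ℂ)-1) = ((v-1:ℝ):ℂ) by push_cast; ring,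
      ← Complex.ofReal_cpow hx0, ← Complex.ofReal_cpow h1x,
      ← Complex.ofReal_mul, Complex.ofReal_re]
  have key := integrableOn_image_iff_integrableOn_abs_deriv_smul
      (f := fun x : ℝ => x / (1-x)) (f' := fun x : ℝ => ((1-x)^2)⁻¹) measurableSet_Ioo
      (fun x hx => (deriv_aux hx).hasDerivWithinAt) injOn_aux
      (fun t => t ^ (u-1) * (1+t) ^ (-u-v))
  rw [image_aux] at key
  rw [key]
  exact hIoo.congr_fun (fun x hx => (pointwise_aux u v hx).symm) measurableSet_Ioo

/-- Abramowitz–Stegun 13.5.12: for integer `b ≤ 0` and `a > 0`,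
`U(a,b,z) → Γ(1-b)/Γ(1+a-b)` as `z → 0⁺`. -/
theorem stmt7 (a : ℝ) (ha : 0 < a) (b : ℤ) (hb : b ≤ 0) :
    Filter.Tendsto (fun z : ℝ => tricomiU a (b : ℝ) z)
      (nhdsWithin 0 (Set.Ioi 0))
      (nhds (Real.Gamma (1 - (b : ℝ)) / Real.Gamma (1 + a - (b : ℝ)))) := by
  have hv : (0:ℝ) < 1 - b := by
    have : (b:ℝ) ≤ 0 := by exact_mod_cast hb
    linarith
  have hexp : (b:ℝ) - a - 1 = -a - (1 - b) := by ring
  set g : ℝ → ℝ := fun t => t ^ (a-1) * (1+t) ^ (-a - (1-b)) with hg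
  have hgint : IntegrableOn g (Ioi 0) := integrand_integrable a (1-b) ha hv
  have hval : ∫ t in Ioi (0:ℝ), g t
      = Real.Gamma a * Real.Gamma (1-b) / Real.Gamma (a + (1-b)) := by
    rw [hg, subst_aux a (1-b) ha hv, realBeta a (1-b) ha hv]
  -- dominated convergence
  have hDCT : Tendsto (fun z : ℝ => ∫ t in Ioi (0:ℝ),
      Real.exp (-z * t) * t ^ (a - 1) * (1 + t) ^ ((b:ℝ) - a - 1))
      (nhdsWithin 0 (Set.Ioi 0)) (nhds (∫ t in Ioi (0:ℝ), g t)) := by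
    refine MeasureTheory.tendsto_integral_filter_of_dominated_convergence g ?_ ?_ hgint ?_
    · refine Filter.Eventually.of_forall fun z => ?_
      apply Measurable.aestronglyMeasurable
      fun_prop
    · filter_upwards [self_mem_nhdsWithin] with z hz
      rw [ae_restrict_iff' measurableSet_Ioi]
      refine Filter.Eventually.of_forall fun t ht => ?_
      rw [mem_Ioi] at ht hz
      have h1 : Real.exp (-z * t) ≤ 1 := by
        rw [Real.exp_le_one_iff]; nlinarith
      have h2 : (0:ℝ) ≤ t ^ (a-1) * (1+t) ^ ((b:ℝ)-a-1) := by positivity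
      rw [Real.norm_eq_abs, abs_of_nonneg (by positivity)]
      show _ ≤ t ^ (a-1) * (1+t) ^ (-a - (1-(b:ℝ)))
      rw [← hexp]
      calc Real.exp (-z*t) * t ^ (a-1) * (1+t) ^ ((b:ℝ)-a-1)
          ≤ 1 * (t ^ (a-1) * (1+t) ^ ((b:ℝ)-a-1)) := by
            rw [mul_assoc]; exact mul_le_mul_of_nonneg_right h1 h2
        _ = t ^ (a-1) * (1+t) ^ ((b:ℝ)-a-1) := one_mul _
    · rw [ae_restrict_iff' measurableSet_Ioi]
      refine Filter.Eventually.of_forall fun t ht => ?_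
      have hc : Tendsto (fun z : ℝ => Real.exp (-z * t) * t ^ (a-1) * (1+t) ^ ((b:ℝ)-a-1))
          (nhds 0) (nhds (g t)) := by
        have : Continuous fun z : ℝ => Real.exp (-z * t) * t ^ (a-1) * (1+t) ^ ((b:ℝ)-a-1) := by
          fun_prop
        have h0 := this.tendsto 0
        simpa [hg, hexp] using h0
      exact hc.mono_left nhdsWithin_le_nhds
  have hGa : Real.Gamma a ≠ 0 := (Real.Gamma_pos_of_pos ha).ne'
  have : Tendsto (fun z : ℝ => tricomiU a (b:ℝ) z) (nhdsWithin 0 (Set.Ioi 0))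
      (nhds ((1 / Real.Gamma a) * ∫ t in Ioi (0:ℝ), g t)) := by
    unfold tricomiU
    exact hDCT.const_mul _
  convert this using 2
  rw [hval, show a + (1-b) = 1 + a - b by ring]
  field_simp
end
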